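/- Let G = (V, E) be a graph, V₀, V₁ ⊆ V, and for i ∈ {0,1} let 𝒫ᵢ be a system of pairwise vertex-disjoint V₀V₁-paths in G. Then there exists a system 𝒫 of pairwise vertex-disjoint V₀V₁-paths with V(𝒫) ∩ Vᵢ ⊇ V(𝒫ᵢ) ∩ Vᵢ for i ∈ {0,1}. -/

import Mathlib

/-- A `V₀V₁`-path in `G`: a finite path meeting `V₀` and `V₁` which is subgraph-minimal with
this property, i.e. it meets `V₀` exactly in its first vertex and `V₁` exactly in its last. -/
structure V01Path {V : Type*} (G : SimpleGraph V) (V₀ V₁ : Set V) where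
  first : V
  last : V
  walk : G.Walk first last
  isPath : walk.IsPath
  first_mem : first ∈ V₀
  last_mem : last ∈ V₁
  meets_V₀_once : ∀ x ∈ walk.support, x ∈ V₀ → x = first
  meets_V₁_once : ∀ x ∈ walk.support, x ∈ V₁ → x = last

/-- The vertex set of a system of paths. -/
def pathsVerts {V : Type*} {G : SimpleGraph V} {V₀ V₁ : Set V}
    (Ps : Set (V01Path G V₀ V₁)) : Set V :=
  ⋃ p ∈ Ps, {x | x ∈ p.walk.support}

section DTAux

variable {V : Type*} {G : SimpleGraph V}

/-- On a walk with no repeated vertices, the index of the final vertex is maximal. -/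
private theorem DT.indexOf_le_end [DecidableEq V] {a x : V} (w : G.Walk a x)
    (hn : w.support.Nodup) : ∀ y ∈ w.support, w.support.idxOf y ≤ w.support.idxOf x := by
  induction w with
  | nil =>
    intro y hy
    simp only [SimpleGraph.Walk.support_nil, List.mem_singleton] at hy
    subst hy; exact le_rfl
  | @cons u v z h p ih =>
    intro y hy
    rw [SimpleGraph.Walk.support_cons] at hy hn ⊢
    obtain ⟨hu, hp⟩ := List.nodup_cons.mp hn
    have hxp : z ∈ p.support := p.end_mem_support
    have hxu : z ≠ u := fun e => hu (e ▸ hxp)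
    rcases List.mem_cons.mp hy with rfl | hyp
    · simp [List.idxOf_cons_self]
    · have hyu : y ≠ u := fun e => hu (e ▸ hyp)
      rw [List.idxOf_cons_ne _ (Ne.symm hyu), List.idxOf_cons_ne _ (Ne.symm hxu)]
      exact Nat.succ_le_succ (ih hp y hyp)

private theorem DT.support_split [DecidableEq V] {a b x : V} (w : G.Walk a b)
    (hx : x ∈ w.support) :
    w.support = (w.takeUntil x hx).support ++ (w.dropUntil x hx).support.tail := by
  conv_lhs => rw [← SimpleGraph.Walk.take_spec w hx]
  exact SimpleGraph.Walk.support_append _ _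

private theorem DT.mem_takeUntil_iff [DecidableEq V] {a b x y : V} (w : G.Walk a b)
    (hn : w.support.Nodup) (hx : x ∈ w.support) :
    y ∈ (w.takeUntil x hx).support ↔
      y ∈ w.support ∧ w.support.idxOf y ≤ w.support.idxOf x := by
  have hsplit := DT.support_split w hx
  have hnod : ((w.takeUntil x hx).support ++ (w.dropUntil x hx).support.tail).Nodup := by
    rw [← hsplit]; exact hn
  have hxt : x ∈ (w.takeUntil x hx).support := SimpleGraph.Walk.end_mem_support _
  have hidxx : w.support.idxOf x = (w.takeUntil x hx).support.idxOf x := by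
    rw [hsplit]; exact List.idxOf_append_of_mem hxt
  constructor
  · intro hy
    refine ⟨SimpleGraph.Walk.support_takeUntil_subset w hx hy, ?_⟩
    have h1 : w.support.idxOf y = (w.takeUntil x hx).support.idxOf y := by
      rw [hsplit]; exact List.idxOf_append_of_mem hy
    rw [h1, hidxx]
    exact DT.indexOf_le_end _ (List.nodup_append.mp hnod).1 y hy
  · rintro ⟨hyW, hle⟩
    by_contra hyt
    have hy2 : y ∈ (w.dropUntil x hx).support.tail := by
      have h := hyW; rw [hsplit] at h
      exact (List.mem_append.mp h).resolve_left hyt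
    have h2 : w.support.idxOf y
        = (w.takeUntil x hx).support.length + (w.dropUntil x hx).support.tail.idxOf y := by
      rw [hsplit]; exact List.idxOf_append_of_notMem hyt
    have h3 : (w.takeUntil x hx).support.idxOf x < (w.takeUntil x hx).support.length :=
      List.idxOf_lt_length_iff.mpr hxt
    rw [h2, hidxx] at hle
    omega

private theorem DT.mem_dropUntil_iff [DecidableEq V] {a b x y : V} (w : G.Walk a b)
    (hn : w.support.Nodup) (hx : x ∈ w.support) :
    y ∈ (w.dropUntil x hx).support ↔
      y ∈ w.support ∧ w.support.idxOf x ≤ w.support.idxOf y := by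
  have hsplit := DT.support_split w hx
  constructor
  · intro hy
    refine ⟨SimpleGraph.Walk.support_dropUntil_subset w hx hy, ?_⟩
    have hy' : y ∈ x :: (w.dropUntil x hx).support.tail := by
      rw [← SimpleGraph.Walk.support_eq_cons]; exact hy
    rcases List.mem_cons.mp hy' with rfl | hyt
    · exact le_rfl
    · by_contra hlt
      push_neg at hlt
      have hyTake : y ∈ (w.takeUntil x hx).support :=
        (DT.mem_takeUntil_iff w hn hx).mpr
          ⟨SimpleGraph.Walk.support_dropUntil_subset w hx hy, le_of_lt hlt⟩
      have hd := List.disjoint_of_nodup_append (by rw [← hsplit]; exact hn)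
      exact hd hyTake hyt
  · rintro ⟨hyW, hle⟩
    have hcase : y ∈ (w.takeUntil x hx).support ∨ y ∈ (w.dropUntil x hx).support.tail := by
      rw [hsplit] at hyW; exact List.mem_append.mp hyW
    rcases hcase with h1 | h2
    · have h1' := ((DT.mem_takeUntil_iff w hn hx).mp h1).2
      have hxy : x = y := (List.idxOf_inj hx).mp (le_antisymm hle h1')
      rw [← hxy]; exact SimpleGraph.Walk.start_mem_support _
    · exact List.mem_of_mem_tail h2

variable {V₀ V₁ : Set V}

/-- Glue the initial segment of `p` (up to `x`) to the final segment of `q` (from `x`). -/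
private def DT.glue [DecidableEq V] (p q : V01Path G V₀ V₁) (x : V)
    (hxp : x ∈ p.walk.support) (hxq : x ∈ q.walk.support)
    (hdis : ∀ y, y ∈ (p.walk.takeUntil x hxp).support →
      y ∈ (q.walk.dropUntil x hxq).support → y = x) : V01Path G V₀ V₁ where
  first := p.first
  last := q.last
  walk := (p.walk.takeUntil x hxp).append (q.walk.dropUntil x hxq)
  isPath := by
    rw [SimpleGraph.Walk.isPath_def, SimpleGraph.Walk.support_append]
    have hdrops := (q.isPath.dropUntil hxq).support_nodup
    have hdrops' : (x :: (q.walk.dropUntil x hxq).support.tail).Nodup := by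
      rw [← SimpleGraph.Walk.support_eq_cons]; exact hdrops
    have htail : (q.walk.dropUntil x hxq).support.tail.Nodup := (List.nodup_cons.mp hdrops').2
    have hxnot : x ∉ (q.walk.dropUntil x hxq).support.tail := (List.nodup_cons.mp hdrops').1
    refine List.Nodup.append (p.isPath.takeUntil hxp).support_nodup htail ?_
    intro a ha ha'
    have hax : a = x := hdis a ha (List.mem_of_mem_tail ha')
    subst hax
    exact hxnot ha'
  first_mem := p.first_mem
  last_mem := q.last_mem
  meets_V₀_once := by
    intro y hy hy0
    rw [SimpleGraph.Walk.mem_support_append_iff] at hy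
    rcases hy with h1 | h2
    · exact p.meets_V₀_once y (SimpleGraph.Walk.support_takeUntil_subset _ hxp h1) hy0
    · have hyq : y ∈ q.walk.support := SimpleGraph.Walk.support_dropUntil_subset _ hxq h2
      have hyf : y = q.first := q.meets_V₀_once y hyq hy0
      have h0 : q.walk.support.idxOf q.first = 0 := by
        conv_lhs => rw [SimpleGraph.Walk.support_eq_cons]
        exact List.idxOf_cons_self
      have hge := ((DT.mem_dropUntil_iff q.walk q.isPath.support_nodup hxq).mp h2).2
      rw [hyf, h0] at hge
      have hx0 : q.walk.support.idxOf x = q.walk.support.idxOf q.first := by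
        rw [h0]; omega
      have hq0 : x = q.first :=
        (List.idxOf_inj hxq).mp hx0
      have hxV0 : x ∈ V₀ := by rw [hq0, ← hyf]; exact hy0
      have hxfirst := p.meets_V₀_once x hxp hxV0
      rw [hyf, ← hq0]; exact hxfirst
  meets_V₁_once := by
    intro y hy hy1
    rw [SimpleGraph.Walk.mem_support_append_iff] at hy
    rcases hy with h1 | h2
    · have hyp : y ∈ p.walk.support := SimpleGraph.Walk.support_takeUntil_subset _ hxp h1
      have hyl : y = p.last := p.meets_V₁_once y hyp hy1
      have hle := ((DT.mem_takeUntil_iff p.walk p.isPath.support_nodup hxp).mp h1).2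
      have hmax0 := DT.indexOf_le_end p.walk p.isPath.support_nodup x hxp
      have hmax : p.walk.support.idxOf x ≤ p.walk.support.idxOf y := by
        rw [hyl]; exact hmax0
      have hxy : y = x := (List.idxOf_inj hyp).mp (le_antisymm hle hmax)
      have hxV1 : x ∈ V₁ := by rw [← hxy]; exact hy1
      have := q.meets_V₁_once x hxq hxV1
      rw [hxy]; exact this
    · exact q.meets_V₁_once y (SimpleGraph.Walk.support_dropUntil_subset _ hxq h2) hy1

private theorem DT.glue_support [DecidableEq V] (p q : V01Path G V₀ V₁) (x : V)
    (hxp : x ∈ p.walk.support) (hxq : x ∈ q.walk.support)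
    (hdis : ∀ y, y ∈ (p.walk.takeUntil x hxp).support →
      y ∈ (q.walk.dropUntil x hxq).support → y = x) {y : V} :
    y ∈ (DT.glue p q x hxp hxq hdis).walk.support ↔
      y ∈ (p.walk.takeUntil x hxp).support ∨ y ∈ (q.walk.dropUntil x hxq).support :=
  SimpleGraph.Walk.mem_support_append_iff _ _

private theorem DT.glue_first [DecidableEq V] (p q : V01Path G V₀ V₁) (x : V)
    (hxp : x ∈ p.walk.support) (hxq : x ∈ q.walk.support)
    (hdis : ∀ y, y ∈ (p.walk.takeUntil x hxp).support →
      y ∈ (q.walk.dropUntil x hxq).support → y = x) :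
    (DT.glue p q x hxp hxq hdis).first = p.first := rfl

private theorem DT.glue_last [DecidableEq V] (p q : V01Path G V₀ V₁) (x : V)
    (hxp : x ∈ p.walk.support) (hxq : x ∈ q.walk.support)
    (hdis : ∀ y, y ∈ (p.walk.takeUntil x hxp).support →
      y ∈ (q.walk.dropUntil x hxq).support → y = x) :
    (DT.glue p q x hxp hxq hdis).last = q.last := rfl

end DTAux

/-- **Diestel–Thomassen: a Cantor–Bernstein theorem for paths in graphs.** -/
theorem cantor_bernstein_paths {V : Type*} (G : SimpleGraph V) (V₀ V₁ : Set V)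
    (Ps₀ Ps₁ : Set (V01Path G V₀ V₁))
    (h₀ : Ps₀.Pairwise fun p q => Disjoint {x | x ∈ p.walk.support} {x | x ∈ q.walk.support})
    (h₁ : Ps₁.Pairwise fun p q => Disjoint {x | x ∈ p.walk.support} {x | x ∈ q.walk.support}) :
    ∃ Ps : Set (V01Path G V₀ V₁),
      (Ps.Pairwise fun p q => Disjoint {x | x ∈ p.walk.support} {x | x ∈ q.walk.support}) ∧
      pathsVerts Ps₀ ∩ V₀ ⊆ pathsVerts Ps ∩ V₀ ∧
      pathsVerts Ps₁ ∩ V₁ ⊆ pathsVerts Ps ∩ V₁ := by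
  classical
  -- a vertex lies on at most one path of each system
  have hred : ∀ {p p' : V01Path G V₀ V₁}, p ∈ Ps₀ → p' ∈ Ps₀ → ∀ {v : V},
      v ∈ p.walk.support → v ∈ p'.walk.support → p = p' := by
    intro p p' hp hp' v hv hv'
    by_contra hne
    exact Set.disjoint_left.mp (h₀ hp hp' hne) hv hv'
  have hblue : ∀ {q q' : V01Path G V₀ V₁}, q ∈ Ps₁ → q' ∈ Ps₁ → ∀ {v : V},
      v ∈ q.walk.support → v ∈ q'.walk.support → q = q' := by
    intro q q' hq hq' v hv hv'
    by_contra hne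
    exact Set.disjoint_left.mp (h₁ hq hq' hne) hv hv'
  -- contracts
  let CC := V01Path G V₀ V₁ × V01Path G V₀ V₁ × V
  let X : Set CC := {c | c.1 ∈ Ps₀ ∧ c.2.1 ∈ Ps₁ ∧
    c.2.2 ∈ c.1.walk.support ∧ c.2.2 ∈ c.2.1.walk.support}
  let ridx : CC → ℕ := fun c => c.1.walk.support.idxOf c.2.2
  let bidx : CC → ℕ := fun c => c.2.1.walk.support.idxOf c.2.2
  let RB : Set CC → Set CC := fun A =>
    {c | c ∈ A ∧ c ∈ X ∧ ∀ c' ∈ A, c' ∈ X → c'.1 = c.1 → ridx c ≤ ridx c'}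
  let BB : Set CC → Set CC := fun B =>
    {c | c ∈ B ∧ c ∈ X ∧ ∀ c' ∈ B, c' ∈ X → c'.2.1 = c.2.1 → bidx c' ≤ bidx c}
  have hDR : ∀ {A A' : Set CC}, A ⊆ A' → A \ RB A ⊆ A' \ RB A' := by
    intro A A' hAA c hc
    refine ⟨hAA hc.1, fun hc' => hc.2 ?_⟩
    exact ⟨hc.1, hc'.2.1, fun c' hcp hX h1 => hc'.2.2 c' (hAA hcp) hX h1⟩
  have hDB : ∀ {A A' : Set CC}, A ⊆ A' → A \ BB A ⊆ A' \ BB A' := by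
    intro A A' hAA c hc
    refine ⟨hAA hc.1, fun hc' => hc.2 ?_⟩
    exact ⟨hc.1, hc'.2.1, fun c' hcp hX h1 => hc'.2.2 c' (hAA hcp) hX h1⟩
  let g : Set CC →o Set CC :=
    ⟨fun A => X \ ((X \ (A \ RB A)) \ BB (X \ (A \ RB A))), by
      intro A A' hAA
      have h1 : A \ RB A ⊆ A' \ RB A' := hDR hAA
      have h2 : X \ (A' \ RB A') ⊆ X \ (A \ RB A) := Set.diff_subset_diff_right h1
      exact Set.diff_subset_diff_right (hDB h2)⟩
  have hfix0 := OrderHom.map_lfp g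
  set A : Set CC := OrderHom.lfp g with hAdef
  have hA : A = X \ ((X \ (A \ RB A)) \ BB (X \ (A \ RB A))) := hfix0.symm
  set Bs : Set CC := X \ (A \ RB A) with hBdef
  -- now hA : A = X \ (Bs \ BB Bs)
  let μ : Set CC := A ∩ Bs
  have hAX : A ⊆ X := by rw [hA]; exact Set.diff_subset
  have hBX : Bs ⊆ X := Set.diff_subset
  have hμX : μ ⊆ X := fun c hc => hAX hc.1
  have hRBμ : RB A ⊆ μ := by
    intro c hc
    exact ⟨hc.1, hc.2.1, fun hd => hd.2 hc⟩
  have hBBμ : BB Bs ⊆ μ := by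
    intro c hc
    refine ⟨?_, hc.1⟩
    rw [hA]
    exact ⟨hc.2.1, fun hd => hd.2 hc⟩
  have hμRB : μ ⊆ RB A := by
    intro c hc
    rcases hc with ⟨hcA, hcB⟩
    by_contra hn
    exact hcB.2 ⟨hcA, hn⟩
  have hμBB : μ ⊆ BB Bs := by
    intro c hc
    rcases hc with ⟨hcA, hcB⟩
    rw [hA] at hcA
    by_contra hn
    exact hcA.2 ⟨hcB, hn⟩
  -- stability
  have hstab : ∀ c ∈ X, (∃ m ∈ μ, m.1 = c.1 ∧ ridx m ≤ ridx c) ∨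
      (∃ m ∈ μ, m.2.1 = c.2.1 ∧ bidx c ≤ bidx m) := by
    intro c hcX
    by_cases hcA : c ∈ A
    · left
      have hNne : {n : ℕ | ∃ c', c' ∈ A ∧ c' ∈ X ∧ c'.1 = c.1 ∧ ridx c' = n}.Nonempty :=
        ⟨ridx c, c, hcA, hcX, rfl, rfl⟩
      obtain ⟨cm, hcmA, hcmX, hcm1, hcmr⟩ := Nat.sInf_mem hNne
      have hmem : cm ∈ RB A := by
        refine ⟨hcmA, hcmX, fun c' hc'A hc'X h1 => ?_⟩
        rw [hcmr]
        exact Nat.sInf_le ⟨c', hc'A, hc'X, h1.trans hcm1, rfl⟩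
      refine ⟨cm, hRBμ hmem, hcm1, ?_⟩
      rw [hcmr]
      exact Nat.sInf_le ⟨c, hcA, hcX, rfl, rfl⟩
    · have hcb : c ∈ Bs := by
        by_contra hb
        apply hcA
        rw [hA]
        exact ⟨hcX, fun hd => hb hd.1⟩
      right
      have hNne : {n : ℕ | ∃ c', c' ∈ Bs ∧ c' ∈ X ∧ c'.2.1 = c.2.1 ∧ bidx c' = n}.Nonempty :=
        ⟨bidx c, c, hcb, hcX, rfl, rfl⟩
      have hNbdd : BddAbove {n : ℕ | ∃ c', c' ∈ Bs ∧ c' ∈ X ∧ c'.2.1 = c.2.1 ∧ bidx c' = n} := by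
        refine ⟨c.2.1.walk.support.length, ?_⟩
        rintro n ⟨c', hc'B, hc'X, h1, rfl⟩
        have hm : c'.2.2 ∈ c.2.1.walk.support := by rw [← h1]; exact hc'X.2.2.2
        show c'.2.1.walk.support.idxOf c'.2.2 ≤ c.2.1.walk.support.length
        rw [h1]
        exact le_of_lt (List.idxOf_lt_length_iff.mpr hm)
      obtain ⟨cm, hcmB, hcmX, hcm1, hcmb⟩ := Nat.sSup_mem hNne hNbdd
      have hmem : cm ∈ BB Bs := by
        refine ⟨hcmB, hcmX, fun c' hc'B hc'X h1 => ?_⟩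
        rw [hcmb]
        exact le_csSup hNbdd ⟨c', hc'B, hc'X, h1.trans hcm1, rfl⟩
      refine ⟨cm, hBBμ hmem, hcm1, ?_⟩
      rw [hcmb]
      exact le_csSup hNbdd ⟨c, hcb, hcX, rfl, rfl⟩
  -- uniqueness of the matched partner
  have huniqR : ∀ m ∈ μ, ∀ m' ∈ μ, m.1 = m'.1 → m = m' := by
    intro m hm m' hm' h1
    have r := hμRB hm
    have r' := hμRB hm'
    have hle : ridx m ≤ ridx m' := r.2.2 m' hm'.1 (hμX hm') h1.symm
    have hle' : ridx m' ≤ ridx m := r'.2.2 m hm.1 (hμX hm) h1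
    have hm2 : m.2.2 ∈ m.1.walk.support := (hμX hm).2.2.1
    have hm2' : m'.2.2 ∈ m.1.walk.support := by rw [h1]; exact (hμX hm').2.2.1
    have hridx : m.1.walk.support.idxOf m.2.2 = m.1.walk.support.idxOf m'.2.2 := by
      have hr' : ridx m' = m.1.walk.support.idxOf m'.2.2 := by
        show m'.1.walk.support.idxOf m'.2.2 = _
        rw [h1]
      rw [← hr']
      exact le_antisymm hle hle'
    have hx : m.2.2 = m'.2.2 := (List.idxOf_inj hm2).mp hridx
    have hq : m.2.1 = m'.2.1 := by
      refine hblue (hμX hm).2.1 (hμX hm').2.1 (hμX hm).2.2.2 ?_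
      rw [hx]
      exact (hμX hm').2.2.2
    exact Prod.ext_iff.mpr ⟨h1, Prod.ext_iff.mpr ⟨hq, hx⟩⟩
  have huniqB : ∀ m ∈ μ, ∀ m' ∈ μ, m.2.1 = m'.2.1 → m = m' := by
    intro m hm m' hm' h1
    have r := hμBB hm
    have r' := hμBB hm'
    have hle : bidx m' ≤ bidx m := r.2.2 m' hm'.2 (hμX hm') h1.symm
    have hle' : bidx m ≤ bidx m' := r'.2.2 m hm.2 (hμX hm) h1
    have hm2 : m.2.2 ∈ m.2.1.walk.support := (hμX hm).2.2.2
    have hm2' : m'.2.2 ∈ m.2.1.walk.support := by rw [h1]; exact (hμX hm').2.2.2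
    have hbidx : m.2.1.walk.support.idxOf m.2.2 = m.2.1.walk.support.idxOf m'.2.2 := by
      have hr' : bidx m' = m.2.1.walk.support.idxOf m'.2.2 := by
        show m'.2.1.walk.support.idxOf m'.2.2 = _
        rw [h1]
      rw [← hr']
      exact le_antisymm hle' hle
    have hx : m.2.2 = m'.2.2 := (List.idxOf_inj hm2).mp hbidx
    have hp : m.1 = m'.1 := by
      refine hred (hμX hm).1 (hμX hm').1 (hμX hm).2.2.1 ?_
      rw [hx]
      exact (hμX hm').2.2.1
    exact Prod.ext_iff.mpr ⟨hp, Prod.ext_iff.mpr ⟨h1, hx⟩⟩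
  -- the crossing condition needed for gluing
  have halpha : ∀ m (hm : m ∈ μ), ∀ y,
      y ∈ (m.1.walk.takeUntil m.2.2 (hμX hm).2.2.1).support →
      y ∈ (m.2.1.walk.dropUntil m.2.2 (hμX hm).2.2.2).support → y = m.2.2 := by
    intro m hm y hyt hyd
    have hyp : y ∈ m.1.walk.support := SimpleGraph.Walk.support_takeUntil_subset _ _ hyt
    have hyq : y ∈ m.2.1.walk.support := SimpleGraph.Walk.support_dropUntil_subset _ _ hyd
    have hcX : ((m.1, m.2.1, y) : CC) ∈ X := ⟨(hμX hm).1, (hμX hm).2.1, hyp, hyq⟩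
    have h1 := (DT.mem_takeUntil_iff m.1.walk m.1.isPath.support_nodup (hμX hm).2.2.1).mp hyt
    have h2 := (DT.mem_dropUntil_iff m.2.1.walk m.2.1.isPath.support_nodup (hμX hm).2.2.2).mp hyd
    rcases hstab _ hcX with ⟨m', hm', he, hle⟩ | ⟨m', hm', he, hle⟩
    · have hmm : m' = m := huniqR m' hm' m hm he
      subst hmm
      exact (List.idxOf_inj hyp).mp (le_antisymm h1.2 hle)
    · have hmm : m' = m := huniqB m' hm' m hm he
      subst hmm
      exact (List.idxOf_inj hyq).mp (le_antisymm hle h2.2)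
  -- the glued paths
  let gl : (m : CC) → m ∈ μ → V01Path G V₀ V₁ := fun m hm =>
    DT.glue m.1 m.2.1 m.2.2 (hμX hm).2.2.1 (hμX hm).2.2.2 (halpha m hm)
  have hglsup : ∀ m (hm : m ∈ μ) {v : V}, v ∈ (gl m hm).walk.support ↔
      (v ∈ (m.1.walk.takeUntil m.2.2 (hμX hm).2.2.1).support ∨
        v ∈ (m.2.1.walk.dropUntil m.2.2 (hμX hm).2.2.2).support) := fun m hm =>
    DT.glue_support m.1 m.2.1 m.2.2 (hμX hm).2.2.1 (hμX hm).2.2.2 (halpha m hm)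
  -- core disjointness facts
  -- a vertex in the prefix of m and in the tail of m' forces m = m'
  have htd : ∀ m (hm : m ∈ μ), ∀ m' (hm' : m' ∈ μ), ∀ v : V,
      v ∈ (m.1.walk.takeUntil m.2.2 (hμX hm).2.2.1).support →
      v ∈ (m'.2.1.walk.dropUntil m'.2.2 (hμX hm').2.2.2).support → m = m' := by
    intro m hm m' hm' v hvt hvd
    have hvp : v ∈ m.1.walk.support := SimpleGraph.Walk.support_takeUntil_subset _ _ hvt
    have hvq : v ∈ m'.2.1.walk.support := SimpleGraph.Walk.support_dropUntil_subset _ _ hvd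
    have hcX : ((m.1, m'.2.1, v) : CC) ∈ X := ⟨(hμX hm).1, (hμX hm').2.1, hvp, hvq⟩
    have h1 := (DT.mem_takeUntil_iff m.1.walk m.1.isPath.support_nodup (hμX hm).2.2.1).mp hvt
    have h2 := (DT.mem_dropUntil_iff m'.2.1.walk m'.2.1.isPath.support_nodup
      (hμX hm').2.2.2).mp hvd
    rcases hstab _ hcX with ⟨m'', hm'', he, hle⟩ | ⟨m'', hm'', he, hle⟩
    · have hmm : m'' = m := huniqR m'' hm'' m hm he
      subst hmm
      have hvx : v = m''.2.2 :=
        (List.idxOf_inj hvp).mp (le_antisymm h1.2 hle)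
      have hbb : m''.2.1 = m'.2.1 := by
        refine hblue (hμX hm'').2.1 (hμX hm').2.1 (hμX hm'').2.2.2 ?_
        rw [← hvx]
        exact hvq
      exact huniqB m'' hm'' m' hm' hbb
    · have hmm : m'' = m' := huniqB m'' hm'' m' hm' he
      subst hmm
      have hvx : v = m''.2.2 :=
        (List.idxOf_inj hvq).mp (le_antisymm hle h2.2)
      have hrr : m.1 = m''.1 := by
        refine hred (hμX hm).1 (hμX hm'').1 ?_ (hμX hm'').2.2.1
        rw [← hvx]
        exact hvp
      exact huniqR m hm m'' hm'' hrr
  -- glued vs glued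
  have hglgl : ∀ m (hm : m ∈ μ) m' (hm' : m' ∈ μ), ∀ v : V,
      v ∈ (gl m hm).walk.support → v ∈ (gl m' hm').walk.support → m = m' := by
    intro m hm m' hm' v hv hv'
    rcases (hglsup m hm).mp hv with h1 | h1 <;> rcases (hglsup m' hm').mp hv' with h2 | h2
    · have hpp : m.1 = m'.1 :=
        hred (hμX hm).1 (hμX hm').1 (SimpleGraph.Walk.support_takeUntil_subset _ _ h1)
          (SimpleGraph.Walk.support_takeUntil_subset _ _ h2)
      exact huniqR m hm m' hm' hpp
    · exact htd m hm m' hm' v h1 h2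
    · exact (htd m' hm' m hm v h2 h1).symm
    · have hqq : m.2.1 = m'.2.1 :=
        hblue (hμX hm).2.1 (hμX hm').2.1 (SimpleGraph.Walk.support_dropUntil_subset _ _ h1)
          (SimpleGraph.Walk.support_dropUntil_subset _ _ h2)
      exact huniqB m hm m' hm' hqq
  -- glued vs unmatched red
  have hgp : ∀ m (hm : m ∈ μ), ∀ p' ∈ Ps₀, (¬ ∃ m' ∈ μ, m'.1 = p') → ∀ v : V,
      v ∈ (gl m hm).walk.support → v ∈ p'.walk.support → False := by
    intro m hm p' hp' hun v hv hv'
    rcases (hglsup m hm).mp hv with h1 | h1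
    · have hpp : m.1 = p' :=
        hred (hμX hm).1 hp' (SimpleGraph.Walk.support_takeUntil_subset _ _ h1) hv'
      exact hun ⟨m, hm, hpp⟩
    · have hvq : v ∈ m.2.1.walk.support := SimpleGraph.Walk.support_dropUntil_subset _ _ h1
      have hcX : ((p', m.2.1, v) : CC) ∈ X := ⟨hp', (hμX hm).2.1, hv', hvq⟩
      have h2 := (DT.mem_dropUntil_iff m.2.1.walk m.2.1.isPath.support_nodup
        (hμX hm).2.2.2).mp h1
      rcases hstab _ hcX with ⟨m'', hm'', he, _⟩ | ⟨m'', hm'', he, hle⟩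
      · exact hun ⟨m'', hm'', he⟩
      · have hmm : m'' = m := huniqB m'' hm'' m hm he
        subst hmm
        have hvx : v = m''.2.2 :=
          (List.idxOf_inj hvq).mp (le_antisymm hle h2.2)
        have hpp : m''.1 = p' := by
          refine hred (hμX hm'').1 hp' (hμX hm'').2.2.1 ?_
          rw [← hvx]
          exact hv'
        exact hun ⟨m'', hm'', hpp⟩
  -- glued vs unmatched blue
  have hgq : ∀ m (hm : m ∈ μ), ∀ q' ∈ Ps₁, (¬ ∃ m' ∈ μ, m'.2.1 = q') → ∀ v : V,
      v ∈ (gl m hm).walk.support → v ∈ q'.walk.support → False := by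
    intro m hm q' hq' hun v hv hv'
    rcases (hglsup m hm).mp hv with h1 | h1
    · have hvp : v ∈ m.1.walk.support := SimpleGraph.Walk.support_takeUntil_subset _ _ h1
      have hcX : ((m.1, q', v) : CC) ∈ X := ⟨(hμX hm).1, hq', hvp, hv'⟩
      have h2 := (DT.mem_takeUntil_iff m.1.walk m.1.isPath.support_nodup
        (hμX hm).2.2.1).mp h1
      rcases hstab _ hcX with ⟨m'', hm'', he, hle⟩ | ⟨m'', hm'', he, _⟩
      · have hmm : m'' = m := huniqR m'' hm'' m hm he
        subst hmm
        have hvx : v = m''.2.2 :=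
          (List.idxOf_inj hvp).mp (le_antisymm h2.2 hle)
        have hqq : m''.2.1 = q' := by
          refine hblue (hμX hm'').2.1 hq' (hμX hm'').2.2.2 ?_
          rw [← hvx]
          exact hv'
        exact hun ⟨m'', hm'', hqq⟩
      · exact hun ⟨m'', hm'', he⟩
    · have hqq : m.2.1 = q' :=
        hblue (hμX hm).2.1 hq' (SimpleGraph.Walk.support_dropUntil_subset _ _ h1) hv'
      exact hun ⟨m, hm, hqq⟩
  -- unmatched red vs unmatched blue
  have hpq : ∀ p ∈ Ps₀, (¬ ∃ m ∈ μ, m.1 = p) → ∀ q ∈ Ps₁, (¬ ∃ m ∈ μ, m.2.1 = q) → ∀ v : V,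
      v ∈ p.walk.support → v ∈ q.walk.support → False := by
    intro p hp hunp q hq hunq v hv hv'
    have hcX : ((p, q, v) : CC) ∈ X := ⟨hp, hq, hv, hv'⟩
    rcases hstab _ hcX with ⟨m'', hm'', he, _⟩ | ⟨m'', hm'', he, _⟩
    · exact hunp ⟨m'', hm'', he⟩
    · exact hunq ⟨m'', hm'', he⟩
  -- the final system of paths
  refine ⟨{r | (∃ m, ∃ hm : m ∈ μ, r = gl m hm) ∨
      (∃ p, p ∈ Ps₀ ∧ (¬ ∃ m ∈ μ, m.1 = p) ∧ r = p) ∨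
      (∃ q, q ∈ Ps₁ ∧ (¬ ∃ m ∈ μ, m.2.1 = q) ∧ r = q)}, ?_, ?_, ?_⟩
  · -- pairwise disjoint
    intro r hr r' hr' hne
    rw [Set.disjoint_left]
    intro v hv hv'
    simp only [Set.mem_setOf_eq] at hv hv' hr hr'
    rcases hr with ⟨m, hm, rfl⟩ | ⟨p, hp, hunp, rfl⟩ | ⟨q, hq, hunq, rfl⟩ <;>
      rcases hr' with ⟨m', hm', rfl⟩ | ⟨p', hp', hunp', rfl⟩ | ⟨q', hq', hunq', rfl⟩
    · have h := hglgl m hm m' hm' v hv hv'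
      exact hne (by cases h; rfl)
    · exact hgp m hm r' hp' hunp' v hv hv'
    · exact hgq m hm r' hq' hunq' v hv hv'
    · exact hgp m' hm' r hp hunp v hv' hv
    · exact hne (hred hp hp' hv hv')
    · exact hpq r hp hunp r' hq' hunq' v hv hv'
    · exact hgq m' hm' r hq hunq v hv' hv
    · exact hpq r' hp' hunp' r hq hunq v hv' hv
    · exact hne (hblue hq hq' hv hv')
  · -- V₀-coverage
    rintro v ⟨hv1, hv0⟩
    refine ⟨?_, hv0⟩
    simp only [pathsVerts, Set.mem_iUnion, Set.mem_setOf_eq] at hv1 ⊢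
    obtain ⟨p, hp, hvp⟩ := hv1
    have hvfirst : v = p.first := p.meets_V₀_once v hvp hv0
    by_cases hmch : ∃ m ∈ μ, m.1 = p
    · obtain ⟨m, hmμ, hm1⟩ := hmch
      refine ⟨gl m hmμ, Or.inl ⟨m, hmμ, rfl⟩, ?_⟩
      have hfirst : m.1.first ∈ (gl m hmμ).walk.support := by
        refine (hglsup m hmμ).mpr (Or.inl ?_)
        exact SimpleGraph.Walk.start_mem_support _
      have : v = m.1.first := by rw [hvfirst, hm1]
      rw [this]
      exact hfirst
    · exact ⟨p, Or.inr (Or.inl ⟨p, hp, hmch, rfl⟩), hvp⟩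
  · -- V₁-coverage
    rintro v ⟨hv1, hv0⟩
    refine ⟨?_, hv0⟩
    simp only [pathsVerts, Set.mem_iUnion, Set.mem_setOf_eq] at hv1 ⊢
    obtain ⟨q, hq, hvq⟩ := hv1
    have hvlast : v = q.last := q.meets_V₁_once v hvq hv0
    by_cases hmch : ∃ m ∈ μ, m.2.1 = q
    · obtain ⟨m, hmμ, hm1⟩ := hmch
      refine ⟨gl m hmμ, Or.inl ⟨m, hmμ, rfl⟩, ?_⟩
      have hlast : m.2.1.last ∈ (gl m hmμ).walk.support := by
        refine (hglsup m hmμ).mpr (Or.inr ?_)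
        exact SimpleGraph.Walk.end_mem_support _
      have : v = m.2.1.last := by rw [hvlast, hm1]
      rw [this]
      exact hlast
    · exact ⟨q, Or.inr (Or.inr ⟨q, hq, hmch, rfl⟩), hvq⟩
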